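/- Let G be a group, p a prime, k a field of characteristic p, and K ≤ H normal subgroups of G with [H : K] finite and p dividing [H : K]. If x ∈ k[G/K] is fixed by every element of H (for the action of G by left multiplication on cosets), then the image of x under the canonical map k[G/K] → k[G/H] is zero. -/

import Mathlib

/-- The canonical map of coset spaces `G ⧸ S → G ⧸ T` induced by an inclusion `S ≤ T` of
subgroups, sending `gS` to `gT`. -/
def quotMap {G : Type} [Group G] {S T : Subgroup G} (h : S ≤ T) : G ⧸ S → G ⧸ T :=
  Quotient.map' id fun _ _ hab =>
    QuotientGroup.leftRel_apply.mpr (h (QuotientGroup.leftRel_apply.mp hab))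

/-- **(Chirvasitu–Kanda, key step in Theorem 3.1, (a) ⇒ (c).)** Let `G` be a group, `p` a
prime, `k` a field of characteristic `p`, and `K ≤ H` normal subgroups of `G` with `[H : K]`
finite and divisible by `p`. If `x ∈ k[G/K]` (the `k`-vector space with basis `G/K`, with
`G` acting by left multiplication extended `k`-linearly) is fixed by every element of `H`,
then the image of `x` under the canonical map `k[G/K] → k[G/H]` is zero. -/
theorem stmt_13 (G : Type) [Group G] (p : ℕ) (hp : p.Prime) (k : Type) [Field k] [CharP k p]
    (K H : Subgroup G) [K.Normal] [H.Normal] (hKH : K ≤ H)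
    (hfin : K.relIndex H ≠ 0) (hdvd : p ∣ K.relIndex H)
    (x : (G ⧸ K) →₀ k)
    (hx : ∀ h ∈ H, Finsupp.mapDomain (fun c : G ⧸ K => h • c) x = x) :
    Finsupp.mapDomain (quotMap hKH) x = 0 := by
  classical
  set f := quotMap hKH with hf
  have hfmk : ∀ a : G, f (↑a : G ⧸ K) = (↑a : G ⧸ H) := fun a => rfl
  have hconst : ∀ h ∈ H, ∀ z : G ⧸ K, x (h • z) = x z := by
    intro h hh z
    conv_lhs => rw [← hx h hh]
    exact Finsupp.mapDomain_apply (MulAction.injective h) x z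
  have hconst2 : ∀ z z' : G ⧸ K, f z = f z' → x z = x z' := by
    intro z z' hzz
    obtain ⟨a, rfl⟩ := QuotientGroup.mk_surjective z
    obtain ⟨b, rfl⟩ := QuotientGroup.mk_surjective z'
    rw [hfmk, hfmk] at hzz
    have hab : a⁻¹ * b ∈ H := (QuotientGroup.eq).mp hzz
    have hh : b * a⁻¹ ∈ H := by
      have := (Subgroup.Normal.conj_mem ‹H.Normal› _ hab b)
      simpa [mul_assoc] using this
    have hb : (↑b : G ⧸ K) = (b * a⁻¹) • (↑a : G ⧸ K) := by
      show _ = (↑(b * a⁻¹ * a) : G ⧸ K)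
      rw [inv_mul_cancel_right]
    rw [hb, hconst _ hh]
  ext y
  rw [Finsupp.zero_apply]
  rw [Finsupp.mapDomain, Finsupp.sum_apply, Finsupp.sum]
  have hsing : ∀ a ∈ x.support, (Finsupp.single (f a) (x a)) y = if f a = y then x a else 0 := by
    intro a _; rw [Finsupp.single_apply]
  rw [Finset.sum_congr rfl hsing, ← Finset.sum_filter]
  set S : Finset (G ⧸ K) := x.support.filter (fun a => f a = y) with hS
  rcases Finset.eq_empty_or_nonempty S with hSe | ⟨a₀, ha₀⟩
  · rw [hSe, Finset.sum_empty]
  · have ha₀' := Finset.mem_filter.mp ha₀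
    have hc : x a₀ ≠ 0 := Finsupp.mem_support_iff.mp ha₀'.1
    have hfa₀ : f a₀ = y := ha₀'.2
    -- S = fiber of f over y
    have hmem : ∀ z : G ⧸ K, z ∈ S ↔ f z = y := by
      intro z
      constructor
      · intro hz; exact (Finset.mem_filter.mp hz).2
      · intro hz
        refine Finset.mem_filter.mpr ⟨Finsupp.mem_support_iff.mpr ?_, hz⟩
        rw [hconst2 z a₀ (by rw [hz, hfa₀])]; exact hc
    -- fiber is equivalent to H ⧸ K.subgroupOf H
    obtain ⟨g, rfl⟩ := QuotientGroup.mk_surjective a₀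
    have hfin' : Finite (H ⧸ K.subgroupOf H) := Nat.finite_of_card_ne_zero hfin
    let φ : H ⧸ K.subgroupOf H → {z : G ⧸ K // z ∈ S} := fun q =>
      Quotient.liftOn' q
        (fun h => ⟨(↑(g * (h : G)) : G ⧸ K), by
          rw [hmem, hfmk, ← hfa₀, hfmk]
          exact (QuotientGroup.eq).mpr (by simpa using (mul_mem (inv_mem h.2) h.2))⟩)
        (by
          intro h₁ h₂ hrel
          have hmemK : h₁⁻¹ * h₂ ∈ K.subgroupOf H := QuotientGroup.leftRel_apply.mp hrel
          have : (h₁ : G)⁻¹ * (h₂ : G) ∈ K := by simpa using Subgroup.mem_subgroupOf.mp hmemK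
          exact Subtype.ext ((QuotientGroup.eq).mpr (by simpa [mul_assoc] using this)))
    have hφbij : Function.Bijective φ := by
      constructor
      · intro q₁ q₂ hq
        obtain ⟨h₁, rfl⟩ := Quotient.mk''_surjective q₁
        obtain ⟨h₂, rfl⟩ := Quotient.mk''_surjective q₂
        have : (↑(g * (h₁ : G)) : G ⧸ K) = ↑(g * (h₂ : G)) := congrArg Subtype.val hq
        have hK : (g * (h₁:G))⁻¹ * (g * (h₂:G)) ∈ K := (QuotientGroup.eq).mp this
        apply Quotient.sound'
        refine QuotientGroup.leftRel_apply.mpr ?_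
        show ((h₁⁻¹ * h₂ : H) : G) ∈ K
        simpa [mul_assoc] using hK
      · rintro ⟨z, hz⟩
        obtain ⟨a, rfl⟩ := QuotientGroup.mk_surjective z
        have : f (↑a : G ⧸ K) = y := (hmem _).mp hz
        rw [hfmk, ← hfa₀, hfmk] at this
        have hga : g⁻¹ * a ∈ H := (QuotientGroup.eq).mp this.symm
        refine ⟨Quotient.mk'' ⟨g⁻¹ * a, hga⟩, ?_⟩
        apply Subtype.ext
        show (↑(g * (g⁻¹ * a)) : G ⧸ K) = ↑a
        rw [mul_inv_cancel_left]
    -- card S = relindex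
    have hcard : S.card = K.relIndex H := by
      have h1 : Nat.card {z : G ⧸ K // z ∈ S} = K.relIndex H := by
        rw [← Nat.card_congr (Equiv.ofBijective φ hφbij)]
        rfl
      rw [← h1]
      simp [Nat.card_eq_fintype_card, Fintype.card_coe]
    -- all values equal to x a₀
    have hval : ∀ a ∈ S, x a = x ↑g := fun a ha =>
      hconst2 _ _ (by rw [(hmem a).mp ha, hfa₀])
    rw [Finset.sum_congr rfl hval, Finset.sum_const, hcard, nsmul_eq_mul,
      (CharP.cast_eq_zero_iff k p _).mpr hdvd, zero_mul]
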